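/- Let k_1,...,k_n ≥ 4, A = {1,...,k_1} × ... × {1,...,k_n}, and let σ be the cyclic lexicographic successor on A. Define a deterministic 2-recall strategy vector f for a game U: on state (a,b), if a ≠ b and (a_j − b_j) mod k_j ∈ {0,1} for all j ('move-on'), each player i plays σ_i(a); else if (b_j − a_j) mod k_j ∈ {0,1,2} for all j ('query'), each player i plays b_i if b_i ∈ BR_i(b) and b_i − 1 mod k_i otherwise; else ('repeat') each player i plays b_i. If U has at least one pure Nash equilibrium, then from every initial state in A², the run of f converges to a state (p,p) with p a pure Nash equilibrium of U. -/

import Mathlib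

/-- The lexicographic successor map on `∏ i, Fin (k i)` (actions `1,…,kᵢ`
encoded as `0,…,kᵢ-1`). -/
def lexSucc {n : ℕ} (k : Fin n → ℕ) (hk : ∀ i, 0 < k i)
    (a : (i : Fin n) → Fin (k i)) : (i : Fin n) → Fin (k i) :=
  fun i =>
    if ∀ j, i < j → ((a j : ℕ) = k j - 1) then
      ⟨((a i : ℕ) + 1) % k i, Nat.mod_lt _ (hk i)⟩
    else a i

lemma Dsplit (K x y : ℕ) (hx : x < K) (hy : y < K) :
    (x + K - y) % K = if y ≤ x then x - y else x + K - y := by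
  split_ifs with h
  · have h1 : x + K - y = (x - y) + K := by omega
    rw [h1, Nat.add_mod_right, Nat.mod_eq_of_lt (by omega)]
  · rw [Nat.mod_eq_of_lt (by omega)]

lemma lexSucc_val {n : ℕ} (k : Fin n → ℕ) (hk : ∀ i, 0 < k i) (a : ∀ i, Fin (k i)) (i : Fin n) :
    (lexSucc k hk a i : ℕ) = (a i : ℕ) ∨ (lexSucc k hk a i : ℕ) = ((a i : ℕ) + 1) % k i := by
  unfold lexSucc
  split_ifs with h
  · right; rfl
  · left; rfl

section enc
variable {n : ℕ} (k : Fin n → ℕ)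

def wgt (i : Fin n) : ℕ := ∏ j ∈ Finset.univ.filter (fun j : Fin n => (i : ℕ) < (j : ℕ)), k j

def enc (a : ∀ i, Fin (k i)) : ℕ := ∑ i, (a i : ℕ) * wgt k i

lemma wgt_pos (hk : ∀ i, 0 < k i) (i : Fin n) : 0 < wgt k i :=
  Finset.prod_pos (fun j _ => hk j)

lemma tele (hk : ∀ i, 0 < k i) :
    ∀ d m, m + d = n →
      (∑ j ∈ Finset.univ.filter (fun j : Fin n => m ≤ (j : ℕ)), (k j - 1) * wgt k j) + 1 =
      ∏ j ∈ Finset.univ.filter (fun j : Fin n => m ≤ (j : ℕ)), k j := by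
  intro d
  induction d with
  | zero =>
    intro m hm
    have he : Finset.univ.filter (fun j : Fin n => m ≤ (j : ℕ)) = ∅ := by
      apply Finset.filter_false_of_mem
      intro j _
      have := j.isLt
      omega
    rw [he]; simp
  | succ d ih =>
    intro m hm
    have hmn : m < n := by omega
    set i₀ : Fin n := ⟨m, hmn⟩ with hi₀
    have hsplit : Finset.univ.filter (fun j : Fin n => m ≤ (j : ℕ)) =
        insert i₀ (Finset.univ.filter (fun j : Fin n => m + 1 ≤ (j : ℕ))) := by
      ext j
      simp only [Finset.mem_filter, Finset.mem_insert, Finset.mem_univ, true_and]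
      have hval : (i₀ : ℕ) = m := rfl
      constructor
      · intro hj
        rcases Nat.eq_or_lt_of_le hj with h | h
        · left; apply Fin.ext; omega
        · right; omega
      · rintro (rfl | hj)
        · omega
        · omega
    have hnotmem : i₀ ∉ Finset.univ.filter (fun j : Fin n => m + 1 ≤ (j : ℕ)) := by
      simp [hi₀]
    have hval : (i₀ : ℕ) = m := rfl
    have hwgt : wgt k i₀ = ∏ j ∈ Finset.univ.filter (fun j : Fin n => m + 1 ≤ (j : ℕ)), k j := by
      unfold wgt
      congr 1
    have ihm := ih (m + 1) (by omega)
    rw [hsplit, Finset.sum_insert hnotmem, Finset.prod_insert hnotmem, ← ihm]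
    set S := ∑ j ∈ Finset.univ.filter (fun j : Fin n => m + 1 ≤ (j : ℕ)), (k j - 1) * wgt k j
    have hw : wgt k i₀ = S + 1 := by rw [hwgt, ← ihm]
    obtain ⟨K', hK'⟩ : ∃ K', k i₀ = K' + 1 := ⟨k i₀ - 1, by have := hk i₀; omega⟩
    rw [hK', hw, Nat.add_sub_cancel]
    ring

lemma teleAll (hk : ∀ i, 0 < k i) :
    (∑ j, (k j - 1) * wgt k j) + 1 = ∏ j, k j := by
  have h := tele k hk n 0 (by omega)
  have he : Finset.univ.filter (fun j : Fin n => 0 ≤ (j : ℕ)) = Finset.univ := by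
    apply Finset.filter_true_of_mem; intro j _; omega
  rwa [he] at h

lemma teleIoi (hk : ∀ i, 0 < k i) (i : Fin n) :
    (∑ j ∈ Finset.univ.filter (fun j : Fin n => (i : ℕ) < (j : ℕ)), (k j - 1) * wgt k j) + 1 =
      wgt k i := by
  have h := tele k hk (n - (i + 1)) ((i : ℕ) + 1) (by have := i.isLt; omega)
  have he : Finset.univ.filter (fun j : Fin n => (i : ℕ) + 1 ≤ (j : ℕ)) =
      Finset.univ.filter (fun j : Fin n => (i : ℕ) < (j : ℕ)) := by
    congr 1
  rw [he] at h
  rw [h]; rfl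

lemma enc_lt (hk : ∀ i, 0 < k i) (a : ∀ i, Fin (k i)) : enc k a < ∏ j, k j := by
  have h1 : enc k a ≤ ∑ j, (k j - 1) * wgt k j := by
    apply Finset.sum_le_sum
    intro j _
    exact Nat.mul_le_mul_right _ (by have := (a j).isLt; omega)
  have := teleAll k hk
  omega
end enc

lemma sum_split {n : ℕ} (i₀ : Fin n) (g : Fin n → ℕ) :
    ∑ j, g j = (∑ j ∈ Finset.univ.filter (fun j : Fin n => (j : ℕ) < (i₀ : ℕ)), g j) + g i₀ +
      ∑ j ∈ Finset.univ.filter (fun j : Fin n => (i₀ : ℕ) < (j : ℕ)), g j := by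
  classical
  rw [← Finset.sum_filter_add_sum_filter_not Finset.univ (fun j : Fin n => (j : ℕ) < (i₀ : ℕ)) g]
  have h2 : Finset.univ.filter (fun j : Fin n => ¬ (j : ℕ) < (i₀ : ℕ)) =
      insert i₀ (Finset.univ.filter (fun j : Fin n => (i₀ : ℕ) < (j : ℕ))) := by
    ext j
    simp only [Finset.mem_filter, Finset.mem_insert, Finset.mem_univ, true_and, not_lt]
    constructor
    · intro hj
      rcases Nat.eq_or_lt_of_le hj with h | h
      · left; exact Fin.ext h.symm
      · right; exact h
    · rintro (rfl | hj) <;> omega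
  have hnm : i₀ ∉ Finset.univ.filter (fun j : Fin n => (i₀ : ℕ) < (j : ℕ)) := by simp
  rw [h2, Finset.sum_insert hnm]
  omega

lemma enc_lexSucc {n : ℕ} (k : Fin n → ℕ) (hk : ∀ i, 0 < k i) (a : ∀ i, Fin (k i)) :
    enc k (lexSucc k hk a) = (enc k a + 1) % ∏ j, k j := by
  classical
  have hN : 0 < ∏ j, k j := Finset.prod_pos (fun j _ => hk j)
  by_cases hall : ∀ i, (a i : ℕ) = k i - 1
  · -- all coordinates maximal: successor is all-zero
    have hz : ∀ i, (lexSucc k hk a i : ℕ) = 0 := by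
      intro i
      unfold lexSucc
      rw [if_pos (fun j _ => hall j)]
      have : (a i : ℕ) + 1 = k i := by have := hk i; have := hall i; omega
      simp [this]
    have h1 : enc k (lexSucc k hk a) = 0 := by
      unfold enc
      apply Finset.sum_eq_zero
      intro j _
      rw [hz j]; ring
    have h2 : enc k a = (∏ j, k j) - 1 := by
      have : enc k a = ∑ j, (k j - 1) * wgt k j := by
        apply Finset.sum_congr rfl
        intro j _
        rw [hall j]
      have ht := teleAll k hk
      omega
    rw [h1, h2]
    have : (∏ j, k j) - 1 + 1 = ∏ j, k j := by omega
    rw [this, Nat.mod_self]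
  · push_neg at hall
    set S := Finset.univ.filter (fun i : Fin n => (a i : ℕ) ≠ k i - 1) with hS
    have hSne : S.Nonempty := by
      obtain ⟨i, hi⟩ := hall
      exact ⟨i, by simp [hS, hi]⟩
    set i₀ := S.max' hSne with hi₀
    have hi₀S : i₀ ∈ S := S.max'_mem hSne
    have hi₀lt : (a i₀ : ℕ) + 1 < k i₀ := by
      have h1 : (a i₀ : ℕ) ≠ k i₀ - 1 := by
        have := hi₀S; rw [hS] at this; simpa using this
      have := (a i₀).isLt
      have := hk i₀
      omega
    have hmax : ∀ j, i₀ < j → (a j : ℕ) = k j - 1 := by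
      intro j hj
      by_contra hne
      have hjS : j ∈ S := by simp [hS, hne]
      exact absurd (S.le_max' j hjS) (not_le.mpr hj)
    -- values of the successor
    have hlo : ∀ j : Fin n, (j : ℕ) < (i₀ : ℕ) → lexSucc k hk a j = a j := by
      intro j hj
      unfold lexSucc
      rw [if_neg]
      push_neg
      refine ⟨i₀, ?_, ?_⟩
      · exact hj
      · have := hi₀lt; omega
    have hmid : (lexSucc k hk a i₀ : ℕ) = (a i₀ : ℕ) + 1 := by
      unfold lexSucc
      rw [if_pos hmax]
      simp only
      rw [Nat.mod_eq_of_lt hi₀lt]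
    have hhi : ∀ j : Fin n, (i₀ : ℕ) < (j : ℕ) → (lexSucc k hk a j : ℕ) = 0 := by
      intro j hj
      have hj' : i₀ < j := hj
      unfold lexSucc
      rw [if_pos (fun j' hj'' => hmax j' (lt_trans hj' hj''))]
      have : (a j : ℕ) + 1 = k j := by have := hmax j hj'; have := hk j; omega
      simp [this]
    -- sums
    have hsA := sum_split i₀ (fun j => (a j : ℕ) * wgt k j)
    have hsB := sum_split i₀ (fun j => (lexSucc k hk a j : ℕ) * wgt k j)
    have hLo : (∑ j ∈ Finset.univ.filter (fun j : Fin n => (j : ℕ) < (i₀ : ℕ)),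
        (lexSucc k hk a j : ℕ) * wgt k j) =
        ∑ j ∈ Finset.univ.filter (fun j : Fin n => (j : ℕ) < (i₀ : ℕ)), (a j : ℕ) * wgt k j := by
      apply Finset.sum_congr rfl
      intro j hj
      simp only [Finset.mem_filter] at hj
      rw [hlo j hj.2]
    have hHiB : (∑ j ∈ Finset.univ.filter (fun j : Fin n => (i₀ : ℕ) < (j : ℕ)),
        (lexSucc k hk a j : ℕ) * wgt k j) = 0 := by
      apply Finset.sum_eq_zero
      intro j hj
      simp only [Finset.mem_filter] at hj
      rw [hhi j hj.2]; ring
    have hHiA : (∑ j ∈ Finset.univ.filter (fun j : Fin n => (i₀ : ℕ) < (j : ℕ)),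
        (a j : ℕ) * wgt k j) + 1 = wgt k i₀ := by
      have h1 : (∑ j ∈ Finset.univ.filter (fun j : Fin n => (i₀ : ℕ) < (j : ℕ)),
          (a j : ℕ) * wgt k j) =
          ∑ j ∈ Finset.univ.filter (fun j : Fin n => (i₀ : ℕ) < (j : ℕ)), (k j - 1) * wgt k j := by
        apply Finset.sum_congr rfl
        intro j hj
        simp only [Finset.mem_filter] at hj
        rw [hmax j hj.2]
      rw [h1]
      exact teleIoi k hk i₀
    -- enc a + 1 < N
    have hbound : enc k a + wgt k i₀ ≤ (∏ j, k j) - 1 := by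
      have h1 : enc k a + wgt k i₀ ≤ ∑ j, (k j - 1) * wgt k j := by
        rw [sum_split i₀ (fun j => (k j - 1) * wgt k j)]
        unfold enc
        rw [hsA]
        have c1 : (∑ j ∈ Finset.univ.filter (fun j : Fin n => (j : ℕ) < (i₀ : ℕ)),
            (a j : ℕ) * wgt k j) ≤
            ∑ j ∈ Finset.univ.filter (fun j : Fin n => (j : ℕ) < (i₀ : ℕ)),
            (k j - 1) * wgt k j := by
          apply Finset.sum_le_sum
          intro j _
          exact Nat.mul_le_mul_right _ (by have := (a j).isLt; omega)
        have c2 : (a i₀ : ℕ) * wgt k i₀ + wgt k i₀ ≤ (k i₀ - 1) * wgt k i₀ := by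
          have : (a i₀ : ℕ) * wgt k i₀ + wgt k i₀ = ((a i₀ : ℕ) + 1) * wgt k i₀ := by ring
          rw [this]
          exact Nat.mul_le_mul_right _ (by omega)
        have c3 : (∑ j ∈ Finset.univ.filter (fun j : Fin n => (i₀ : ℕ) < (j : ℕ)),
            (a j : ℕ) * wgt k j) ≤
            ∑ j ∈ Finset.univ.filter (fun j : Fin n => (i₀ : ℕ) < (j : ℕ)),
            (k j - 1) * wgt k j := by
          apply Finset.sum_le_sum
          intro j _
          exact Nat.mul_le_mul_right _ (by have := (a j).isLt; omega)
        omega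
      have := teleAll k hk
      omega
    have hwpos := wgt_pos k hk i₀
    have hlt : enc k a + 1 < ∏ j, k j := by omega
    rw [Nat.mod_eq_of_lt hlt]
    -- the equality
    unfold enc
    rw [hsB, hsA, hLo, hHiB]
    have hmid' : (lexSucc k hk a i₀ : ℕ) * wgt k i₀ = (a i₀ : ℕ) * wgt k i₀ + wgt k i₀ := by
      rw [hmid]; ring
    omega

lemma lexSucc_reaches {n : ℕ} (k : Fin n → ℕ) (hk : ∀ i, 0 < k i)
    (b p : ∀ i, Fin (k i)) : ∃ m : ℕ, (lexSucc k hk)^[m] b = p := by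
  classical
  set N := ∏ j, k j with hNdef
  have hN : 0 < N := Finset.prod_pos (fun j _ => hk j)
  have hiter : ∀ m, enc k ((lexSucc k hk)^[m] b) = (enc k b + m) % N := by
    intro m
    induction m with
    | zero => exact (Nat.mod_eq_of_lt (enc_lt k hk b)).symm
    | succ m ih =>
      rw [Function.iterate_succ_apply', enc_lexSucc k hk, ih, ← hNdef, Nat.mod_add_mod,
        Nat.add_assoc]
  have hinj : Function.Injective (fun m : Fin N => (lexSucc k hk)^[(m : ℕ)] b) := by
    intro m₁ m₂ h
    simp only at h
    have he : (enc k b + (m₁ : ℕ)) % N = (enc k b + (m₂ : ℕ)) % N := by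
      rw [← hiter, ← hiter, h]
    have h2 : (m₁ : ℕ) % N = (m₂ : ℕ) % N :=
      Nat.ModEq.add_left_cancel' (enc k b) he
    rw [Nat.mod_eq_of_lt m₁.isLt, Nat.mod_eq_of_lt m₂.isLt] at h2
    exact Fin.ext h2
  have hcard : Fintype.card (∀ i, Fin (k i)) = Fintype.card (Fin N) := by
    simp [Fintype.card_pi, hNdef]
  have hsurj : Function.Surjective (fun m : Fin N => (lexSucc k hk)^[(m : ℕ)] b) := by
    have := (Fintype.bijective_iff_injective_and_card
      (fun m : Fin N => (lexSucc k hk)^[(m : ℕ)] b)).mpr ⟨hinj, hcard.symm⟩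
    exact this.2
  obtain ⟨m, hm⟩ := hsurj p
  exact ⟨m, hm⟩

section dyn

variable {n : ℕ} (k : Fin n → ℕ)

/-- 'move-on' states -/
def Mo (a b : ∀ i, Fin (k i)) : Prop :=
  a ≠ b ∧ ∀ j, ((a j : ℕ) + k j - (b j : ℕ)) % k j = 0 ∨
               ((a j : ℕ) + k j - (b j : ℕ)) % k j = 1

/-- 'query' states (the second alternative) -/
def Qu (a b : ∀ i, Fin (k i)) : Prop :=
  ∀ j, ((b j : ℕ) + k j - (a j : ℕ)) % k j = 0 ∨
       ((b j : ℕ) + k j - (a j : ℕ)) % k j = 1 ∨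
       ((b j : ℕ) + k j - (a j : ℕ)) % k j = 2

lemma Qu_refl (b : ∀ i, Fin (k i)) : Qu k b b := by
  intro j
  left
  have : (b j : ℕ) + k j - (b j : ℕ) = k j := by omega
  rw [this, Nat.mod_self]

/-- a state cannot be simultaneously move-on and query unless the components agree -/
lemma mo_qu_false (hk4 : ∀ i, 4 ≤ k i) {b c : ∀ i, Fin (k i)}
    (hq : Qu k b c) (hm : Mo k b c) : False := by
  apply hm.1
  funext j
  apply Fin.ext
  have h1 := hm.2 j
  have h2 := hq j
  have hb := (b j).isLt
  have hc := (c j).isLt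
  have h4 := hk4 j
  rw [Dsplit _ _ _ hb hc] at h1
  rw [Dsplit _ _ _ hc hb] at h2
  split_ifs at h1 h2 <;> omega

lemma Lmove (hk4 : ∀ i, 4 ≤ k i) (hk : ∀ i, 0 < k i)
    (f : (∀ i, Fin (k i)) → (∀ i, Fin (k i)) → (∀ i, Fin (k i)))
    (hfm : ∀ a b, a ≠ b →
      (∀ j, ((a j : ℕ) + k j - (b j : ℕ)) % k j = 0 ∨
            ((a j : ℕ) + k j - (b j : ℕ)) % k j = 1) →
      f a b = lexSucc k hk a)
    (a b : ∀ i, Fin (k i)) (hm : Mo k a b) :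
    f a b = lexSucc k hk a ∧ ¬ Mo k b (lexSucc k hk a) ∧ Qu k b (lexSucc k hk a) := by
  have h1 : f a b = lexSucc k hk a := hfm a b hm.1 hm.2
  have hq : Qu k b (lexSucc k hk a) := by
    intro j
    have hd := hm.2 j
    have hv := lexSucc_val k hk a j
    have ha := (a j).isLt
    have hb := (b j).isLt
    have hs := (lexSucc k hk a j).isLt
    have h4 := hk4 j
    rw [Dsplit _ _ _ ha hb] at hd
    rw [Dsplit _ _ _ hs hb]
    rcases hv with hv | hv
    · rw [hv]
      split_ifs at hd ⊢ <;> omega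
    · have hmod : ((a j : ℕ) + 1) % k j = if (a j : ℕ) + 1 < k j then (a j : ℕ) + 1 else 0 := by
        split_ifs with h
        · exact Nat.mod_eq_of_lt h
        · have : (a j : ℕ) + 1 = k j := by omega
          rw [this, Nat.mod_self]
      rw [hmod] at hv
      split_ifs at hv <;> rw [hv] <;> split_ifs at hd ⊢ <;> omega
  exact ⟨h1, fun hm' => mo_qu_false k hk4 hq hm', hq⟩

lemma Lquery_pne (u : Fin n → (∀ i, Fin (k i)) → ℝ)
    (f : (∀ i, Fin (k i)) → (∀ i, Fin (k i)) → (∀ i, Fin (k i)))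
    (hfq : ∀ a b,
      ¬ (a ≠ b ∧ ∀ j, ((a j : ℕ) + k j - (b j : ℕ)) % k j = 0 ∨
                      ((a j : ℕ) + k j - (b j : ℕ)) % k j = 1) →
      (∀ j, ((b j : ℕ) + k j - (a j : ℕ)) % k j = 0 ∨
            ((b j : ℕ) + k j - (a j : ℕ)) % k j = 1 ∨
            ((b j : ℕ) + k j - (a j : ℕ)) % k j = 2) →
      ∀ i, ((∀ y : Fin (k i), u i (Function.update b i y) ≤ u i b) →
              f a b i = b i) ∧
           (¬ (∀ y : Fin (k i), u i (Function.update b i y) ≤ u i b) →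
              (f a b i : ℕ) = ((b i : ℕ) + k i - 1) % k i))
    (a b : ∀ i, Fin (k i)) (hnm : ¬ Mo k a b) (hq : Qu k a b)
    (hP : ∀ i, ∀ y : Fin (k i), u i (Function.update b i y) ≤ u i b) :
    f a b = b :=
  funext fun i => (hfq a b hnm hq i).1 (hP i)

lemma Lquery_npne (hk4 : ∀ i, 4 ≤ k i) (u : Fin n → (∀ i, Fin (k i)) → ℝ)
    (f : (∀ i, Fin (k i)) → (∀ i, Fin (k i)) → (∀ i, Fin (k i)))
    (hfq : ∀ a b,
      ¬ (a ≠ b ∧ ∀ j, ((a j : ℕ) + k j - (b j : ℕ)) % k j = 0 ∨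
                      ((a j : ℕ) + k j - (b j : ℕ)) % k j = 1) →
      (∀ j, ((b j : ℕ) + k j - (a j : ℕ)) % k j = 0 ∨
            ((b j : ℕ) + k j - (a j : ℕ)) % k j = 1 ∨
            ((b j : ℕ) + k j - (a j : ℕ)) % k j = 2) →
      ∀ i, ((∀ y : Fin (k i), u i (Function.update b i y) ≤ u i b) →
              f a b i = b i) ∧
           (¬ (∀ y : Fin (k i), u i (Function.update b i y) ≤ u i b) →
              (f a b i : ℕ) = ((b i : ℕ) + k i - 1) % k i))
    (a b : ∀ i, Fin (k i)) (hnm : ¬ Mo k a b) (hq : Qu k a b)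
    (hnP : ¬ ∀ i, ∀ y : Fin (k i), u i (Function.update b i y) ≤ u i b) :
    Mo k b (f a b) := by
  constructor
  · obtain ⟨i, hi⟩ := not_forall.mp hnP
    have hv := (hfq a b hnm hq i).2 hi
    intro heq
    have := congrFun heq i
    have hval : (b i : ℕ) = (f a b i : ℕ) := congrArg Fin.val this
    rw [hv] at hval
    have hb := (b i).isLt
    have h4 := hk4 i
    rw [Dsplit _ _ _ hb (by omega)] at hval
    split_ifs at hval <;> omega
  · intro j
    by_cases hbr : ∀ y : Fin (k j), u j (Function.update b j y) ≤ u j b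
    · have := (hfq a b hnm hq j).1 hbr
      rw [this]
      left
      have : (b j : ℕ) + k j - (b j : ℕ) = k j := by omega
      rw [this, Nat.mod_self]
    · have hv := (hfq a b hnm hq j).2 hbr
      right
      have hb := (b j).isLt
      have h4 := hk4 j
      have hf := (f a b j).isLt
      rw [Dsplit _ _ _ hb (by omega)] at hv
      rw [Dsplit _ _ _ hb hf, hv]
      split_ifs <;> omega

end dyn

/-- The deterministic 2-recall dynamics of Theorem 17 (each `k i ≥ 4`): on
state `(a,b)`, in 'move-on' states (`a ≠ b` and `(aⱼ-bⱼ) mod kⱼ ∈ {0,1}` for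
all `j`) play `σ(a)`; in 'query' states (`(bⱼ-aⱼ) mod kⱼ ∈ {0,1,2}` for all
`j`) each player repeats `bᵢ` if it is a best reply to `b` and plays
`bᵢ - 1 (mod kᵢ)` otherwise; in all other ('repeat') states play `b`.  If the
game has a pure Nash equilibrium, every run converges to a repeated PNE. -/
theorem stmt18 {n : ℕ} (hn : 2 ≤ n) (k : Fin n → ℕ) (hk4 : ∀ i, 4 ≤ k i)
    (hk : ∀ i, 0 < k i)
    (u : Fin n → ((i : Fin n) → Fin (k i)) → ℝ)
    (f : ((i : Fin n) → Fin (k i)) → ((i : Fin n) → Fin (k i)) →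
      ((i : Fin n) → Fin (k i)))
    (hfm : ∀ a b, a ≠ b →
      (∀ j, ((a j : ℕ) + k j - (b j : ℕ)) % k j = 0 ∨
            ((a j : ℕ) + k j - (b j : ℕ)) % k j = 1) →
      f a b = lexSucc k hk a)
    (hfq : ∀ a b,
      ¬ (a ≠ b ∧ ∀ j, ((a j : ℕ) + k j - (b j : ℕ)) % k j = 0 ∨
                      ((a j : ℕ) + k j - (b j : ℕ)) % k j = 1) →
      (∀ j, ((b j : ℕ) + k j - (a j : ℕ)) % k j = 0 ∨
            ((b j : ℕ) + k j - (a j : ℕ)) % k j = 1 ∨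
            ((b j : ℕ) + k j - (a j : ℕ)) % k j = 2) →
      ∀ i, ((∀ y : Fin (k i), u i (Function.update b i y) ≤ u i b) →
              f a b i = b i) ∧
           (¬ (∀ y : Fin (k i), u i (Function.update b i y) ≤ u i b) →
              (f a b i : ℕ) = ((b i : ℕ) + k i - 1) % k i))
    (hfr : ∀ a b,
      ¬ (a ≠ b ∧ ∀ j, ((a j : ℕ) + k j - (b j : ℕ)) % k j = 0 ∨
                      ((a j : ℕ) + k j - (b j : ℕ)) % k j = 1) →
      ¬ (∀ j, ((b j : ℕ) + k j - (a j : ℕ)) % k j = 0 ∨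
              ((b j : ℕ) + k j - (a j : ℕ)) % k j = 1 ∨
              ((b j : ℕ) + k j - (a j : ℕ)) % k j = 2) →
      f a b = b)
    (hPNE : ∃ p : (i : Fin n) → Fin (k i),
      ∀ i, ∀ y : Fin (k i), u i (Function.update p i y) ≤ u i p)
    (s : ℕ → ((i : Fin n) → Fin (k i)))
    (hrec : ∀ t, s (t + 2) = f (s t) (s (t + 1))) :
    ∃ p : (i : Fin n) → Fin (k i),
      (∀ i, ∀ y : Fin (k i), u i (Function.update p i y) ≤ u i p) ∧
      ∃ T : ℕ, ∀ t, T ≤ t → s t = p := by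
  classical
  obtain ⟨p₀, hp₀⟩ := hPNE
  -- once the run reaches a query state whose second component is a PNE, it stays there
  have absorb : ∀ t b, s (t+1) = b → ¬ Mo k (s t) b → Qu k (s t) b →
      (∀ i, ∀ y : Fin (k i), u i (Function.update b i y) ≤ u i b) →
      ∀ t', t + 1 ≤ t' → s t' = b := by
    intro t b hb hnm hq hP
    have key : ∀ d, s (t+1+d) = b ∧ s (t+1+d+1) = b := by
      intro d
      induction d with
      | zero =>
        refine ⟨hb, ?_⟩
        have h2 := hrec t
        rw [hb] at h2
        rw [show t+1+0+1 = t+2 by ring, h2]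
        exact Lquery_pne k u f hfq (s t) b hnm hq hP
      | succ d ih =>
        refine ⟨?_, ?_⟩
        · rw [show t+1+(d+1) = t+1+d+1 by ring]
          exact ih.2
        · have h2 := hrec (t+1+d)
          rw [show t+1+d+2 = t+1+d+1+1 by ring] at h2
          rw [ih.1, ih.2] at h2
          rw [show t+1+(d+1)+1 = t+1+d+1+1 by ring, h2]
          exact Lquery_pne k u f hfq b b (fun hm => hm.1 rfl) (Qu_refl k b) hP
    intro t' ht'
    have h := (key (t' - (t+1))).1
    rwa [show t+1+(t'-(t+1)) = t' by omega] at h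
  -- main convergence lemma, by induction on the distance to a PNE along the cycle
  have Lconv : ∀ m : ℕ, ∀ t b, s (t+1) = b → ¬ Mo k (s t) b → Qu k (s t) b →
      (∀ i, ∀ y : Fin (k i), u i (Function.update ((lexSucc k hk)^[m] b) i y) ≤
        u i ((lexSucc k hk)^[m] b)) →
      ∃ p : (i : Fin n) → Fin (k i),
        (∀ i, ∀ y : Fin (k i), u i (Function.update p i y) ≤ u i p) ∧
        ∃ T : ℕ, ∀ t'', T ≤ t'' → s t'' = p := by
    intro m
    induction m with
    | zero =>
      intro t b hb hnm hq hP
      simp only [Function.iterate_zero, id_eq] at hP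
      exact ⟨b, hP, t+1, absorb t b hb hnm hq hP⟩
    | succ m ih =>
      intro t b hb hnm hq hP
      by_cases hPb : ∀ i, ∀ y : Fin (k i), u i (Function.update b i y) ≤ u i b
      · exact ⟨b, hPb, t+1, absorb t b hb hnm hq hPb⟩
      · have h2 : s (t+2) = f (s t) b := by rw [hrec t, hb]
        have hmo2 : Mo k b (s (t+2)) := by
          rw [h2]
          exact Lquery_npne k hk4 u f hfq (s t) b hnm hq hPb
        have hLm := Lmove k hk4 hk f hfm b (s (t+2)) hmo2
        have h3 : s (t+3) = lexSucc k hk b := by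
          have h := hrec (t+1)
          rw [show t+1+2 = t+3 by ring, show t+1+1 = t+2 by ring] at h
          rw [hb] at h
          exact h.trans hLm.1
        rw [Function.iterate_succ_apply] at hP
        exact ih (t+2) (lexSucc k hk b)
          (by rw [show t+2+1 = t+3 by ring]; exact h3) hLm.2.1 hLm.2.2 hP
  -- reach a query state within the first two steps
  by_cases hmo : Mo k (s 0) (s 1)
  · have hLm := Lmove k hk4 hk f hfm (s 0) (s 1) hmo
    obtain ⟨m, hm⟩ := lexSucc_reaches k hk (lexSucc k hk (s 0)) p₀
    have h2 : s 2 = lexSucc k hk (s 0) := (hrec 0).trans hLm.1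
    exact Lconv m 1 (lexSucc k hk (s 0)) h2 hLm.2.1 hLm.2.2
      (by rw [hm]; exact hp₀)
  · by_cases hqu : Qu k (s 0) (s 1)
    · obtain ⟨m, hm⟩ := lexSucc_reaches k hk (s 1) p₀
      exact Lconv m 0 (s 1) rfl hmo hqu (by rw [hm]; exact hp₀)
    · have h2 : s 2 = s 1 := (hrec 0).trans (hfr (s 0) (s 1) hmo hqu)
      obtain ⟨m, hm⟩ := lexSucc_reaches k hk (s 1) p₀
      exact Lconv m 1 (s 1) h2 (fun h => h.1 rfl) (Qu_refl k (s 1))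
        (by rw [hm]; exact hp₀)
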